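/- arXiv:2006.02281 — 3 statements merged into one kernel-verified Lean document; each statement's English description precedes it below -/
import Mathlib

section
/- (Theorem 3.1) Let N, M ∈ ℕ with N, M ≥ 1, let L ≥ 1, and for each ℓ = 1,…,L let G^ℓ : ℝ^N → ℝ^M be continuous with ∫_{ℝ^N} |G^ℓ(Z)|² dμ_pr(Z) < ∞, and let Σ^ℓ be an M×M symmetric positive-definite real matrix. For data {Y^ℓ}_{ℓ=1}^L ⊂ ℝ^M let μ_post({Y^ℓ}) be the posterior measure, i.e. the probability measure with dμ_post/dμ_pr(Z) = exp(−Σ_{ℓ=1}^L Φ^ℓ(Z; Y^ℓ)) / ∫ exp(−Σ_{ℓ=1}^L Φ^ℓ(Z'; Y^ℓ)) dμ_pr(Z'). Then for every r > 0 there exists a constant C = C(r) > 0 such that for all data families {Y₁^ℓ}_{ℓ=1}^L and {Y₂^ℓ}_{ℓ=1}^L with max_{ℓ=1,…,L} max(|Y₁^ℓ|, |Y₂^ℓ|) < r, the corresponding posterior measures μ_post¹ and μ_post² satisfy d_Hell(μ_post¹, μ_post²) ≤ C Σ_{ℓ=1}^L |Y₁^ℓ − Y₂^ℓ|. -/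
open MeasureTheory Real

/-- The squared Euclidean norm of a vector in `ℝ^k`. -/
noncomputable def euclNormSq {k : ℕ} (v : Fin k → ℝ) : ℝ := ∑ i, (v i) ^ 2

/-- The Euclidean norm of a vector in `ℝ^k`. -/
noncomputable def euclNorm {k : ℕ} (v : Fin k → ℝ) : ℝ := Real.sqrt (∑ i, (v i) ^ 2)

/-- The Hellinger distance between two measures given by their densities `f`, `g`
with respect to a reference measure `μ₀`:
`d_Hell = sqrt( ½ ∫ (√f − √g)² dμ₀ )`. -/
noncomputable def hellingerDist {X : Type*} [MeasurableSpace X]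
    (μ₀ : Measure X) (f g : X → ℝ) : ℝ :=
  Real.sqrt ((1 / 2) * ∫ x, (Real.sqrt (f x) - Real.sqrt (g x)) ^ 2 ∂μ₀)

/- ### Auxiliary lemmas -/

lemma euclNormSq_nonneg {k : ℕ} (v : Fin k → ℝ) : 0 ≤ euclNormSq v :=
  Finset.sum_nonneg fun _ _ => sq_nonneg _

lemma euclNorm_nonneg {k : ℕ} (v : Fin k → ℝ) : 0 ≤ euclNorm v := Real.sqrt_nonneg _

lemma sq_euclNorm {k : ℕ} (v : Fin k → ℝ) : euclNorm v ^ 2 = euclNormSq v :=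
  Real.sq_sqrt (euclNormSq_nonneg v)

lemma abs_le_euclNorm {k : ℕ} (v : Fin k → ℝ) (i : Fin k) : |v i| ≤ euclNorm v := by
  rw [← Real.sqrt_sq_eq_abs]
  exact Real.sqrt_le_sqrt (Finset.single_le_sum (f := fun j => (v j)^2)
    (fun j _ => sq_nonneg _) (Finset.mem_univ i))

lemma euclNormSq_sub_le {k : ℕ} (a b : Fin k → ℝ) :
    euclNormSq (a - b) ≤ 2 * euclNormSq a + 2 * euclNormSq b := by
  unfold euclNormSq
  rw [Finset.mul_sum, Finset.mul_sum, ← Finset.sum_add_distrib]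
  refine Finset.sum_le_sum fun i _ => ?_
  simp only [Pi.sub_apply]
  nlinarith [sq_nonneg (a i + b i)]

lemma euclNorm_le_one_add_sq {k : ℕ} (v : Fin k → ℝ) :
    euclNorm v ≤ 1 + euclNormSq v := by
  rcases le_or_gt (euclNorm v) 1 with h | h
  · nlinarith [euclNormSq_nonneg v]
  · have h2 : euclNorm v ≤ euclNorm v ^ 2 := by nlinarith
    rw [sq_euclNorm] at h2; linarith

lemma dotProduct_mulVec_le {k : ℕ} (B : Matrix (Fin k) (Fin k) ℝ) (v w : Fin k → ℝ) :
    |dotProduct v (B.mulVec w)| ≤ (∑ i, ∑ j, |B i j|) * (euclNorm v * euclNorm w) := by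
  have h : dotProduct v (B.mulVec w) = ∑ i, ∑ j, v i * (B i j * w j) := by
    simp [dotProduct, Matrix.mulVec, Finset.mul_sum]
  rw [h, Finset.sum_mul]
  refine (Finset.abs_sum_le_sum_abs _ _).trans (Finset.sum_le_sum fun i _ => ?_)
  rw [Finset.sum_mul]
  refine (Finset.abs_sum_le_sum_abs _ _).trans (Finset.sum_le_sum fun j _ => ?_)
  rw [abs_mul, abs_mul]
  calc |v i| * (|B i j| * |w j|) = |B i j| * (|v i| * |w j|) := by ring
  _ ≤ |B i j| * (euclNorm v * euclNorm w) :=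
      mul_le_mul_of_nonneg_left (mul_le_mul (abs_le_euclNorm v i) (abs_le_euclNorm w j)
        (abs_nonneg _) (euclNorm_nonneg v)) (abs_nonneg _)

lemma dotProduct_mulVec_nonneg {k : ℕ} {B : Matrix (Fin k) (Fin k) ℝ} (hB : B.PosSemidef)
    (v : Fin k → ℝ) : 0 ≤ dotProduct v (B.mulVec v) := by
  simpa using hB.re_dotProduct_nonneg v

lemma continuous_qform {k : ℕ} (B : Matrix (Fin k) (Fin k) ℝ) :
    Continuous fun v : Fin k → ℝ => dotProduct v (B.mulVec v) := by
  have h : ∀ v : Fin k → ℝ, dotProduct v (B.mulVec v)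
      = ∑ i, ∑ j, v i * (B i j * v j) := by
    intro v; simp [dotProduct, Matrix.mulVec, Finset.mul_sum]
  simp only [h]
  exact continuous_finset_sum _ fun i _ => continuous_finset_sum _ fun j _ =>
    ((continuous_apply i).mul (continuous_const.mul (continuous_apply j)))

lemma continuous_euclNorm {k : ℕ} : Continuous fun v : Fin k → ℝ => euclNorm v := by
  unfold euclNorm
  exact (continuous_finset_sum _ fun i _ => (continuous_apply i).pow 2).sqrt

lemma continuous_euclNormSq {k : ℕ} : Continuous fun v : Fin k → ℝ => euclNormSq v := by
  unfold euclNormSq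
  exact continuous_finset_sum _ fun i _ => (continuous_apply i).pow 2

lemma gauss_integrable (N : ℕ) (m : Fin N → ℝ) (σ c : ℝ) (hσ : 0 < σ) :
    Integrable (fun Z : Fin N → ℝ => c * Real.exp (-euclNormSq (Z - m) / (2 * σ))) := by
  apply Integrable.const_mul
  have h : ∀ Z : Fin N → ℝ, Real.exp (-euclNormSq (Z - m) / (2 * σ)) =
      ∏ i, Real.exp (-(1/(2*σ)) * (Z i - m i)^2) := by
    intro Z
    rw [← Real.exp_sum]
    congr 1
    unfold euclNormSq
    rw [neg_div, Finset.sum_div, ← Finset.sum_neg_distrib]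
    refine Finset.sum_congr rfl fun i _ => ?_
    simp [Pi.sub_apply]
    ring
  simp only [h]
  exact Integrable.fintype_prod (f := fun i (x : ℝ) => Real.exp (-(1/(2*σ)) * (x - m i)^2))
    fun i => by
      have := (integrable_exp_neg_mul_sq (b := 1/(2*σ)) (by positivity)).comp_sub_right (m i)
      simpa using this

lemma gauss_finite (N : ℕ) (m : Fin N → ℝ) (σ c : ℝ) (hσ : 0 < σ) :
    IsFiniteMeasure ((volume : Measure (Fin N → ℝ)).withDensity fun Z => ENNReal.ofReal
      (c * Real.exp (-euclNormSq (Z - m) / (2 * σ)))) := by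
  constructor
  rw [withDensity_apply _ MeasurableSet.univ, setLIntegral_univ]
  exact (lintegral_ofReal_le_lintegral_enorm _).trans_lt
    (gauss_integrable N m σ c hσ).hasFiniteIntegral

lemma gauss_ne_zero (N : ℕ) (m : Fin N → ℝ) (σ c : ℝ) (hσ : 0 < σ) (hc : 0 < c) :
    ((volume : Measure (Fin N → ℝ)).withDensity fun Z => ENNReal.ofReal
      (c * Real.exp (-euclNormSq (Z - m) / (2 * σ)))) ≠ 0 := by
  intro h
  have huniv : ((volume : Measure (Fin N → ℝ)).withDensity fun Z => ENNReal.ofReal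
      (c * Real.exp (-euclNormSq (Z - m) / (2 * σ)))) Set.univ = 0 := by rw [h]; simp
  rw [withDensity_apply _ MeasurableSet.univ, setLIntegral_univ] at huniv
  have hmeas : Measurable fun Z : Fin N → ℝ => ENNReal.ofReal
      (c * Real.exp (-euclNormSq (Z - m) / (2 * σ))) := by
    apply Measurable.ennreal_ofReal
    apply Continuous.measurable
    have : Continuous fun Z : Fin N → ℝ => euclNormSq (Z - m) :=
      continuous_euclNormSq.comp (continuous_id.sub continuous_const)
    exact continuous_const.mul (((this.neg).div_const _).rexp)
  rw [lintegral_eq_zero_iff hmeas] at huniv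
  have hff : ∀ᵐ Z : Fin N → ℝ, False := by
    filter_upwards [huniv] with Z hZ
    simp only [Pi.zero_apply, ENNReal.ofReal_eq_zero] at hZ
    nlinarith [Real.exp_pos (-euclNormSq (Z - m) / (2 * σ))]
  rw [ae_iff] at hff
  simp only [not_false_iff, Set.setOf_true] at hff
  have hvol : (volume : Measure (Fin N → ℝ)) Set.univ ≠ 0 := by
    simp [Measure.measure_univ_eq_zero]
    exact (NeZero.ne _)
  exact hvol hff

lemma exp_neg_lipschitz {a b : ℝ} (ha : 0 ≤ a) (hb : 0 ≤ b) :
    |Real.exp (-a) - Real.exp (-b)| ≤ |a - b| := by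
  wlog h : a ≤ b generalizing a b
  · rw [abs_sub_comm, abs_sub_comm a b]; exact this hb ha (le_of_not_ge h)
  have h1 : Real.exp (-b) ≤ Real.exp (-a) := Real.exp_le_exp.mpr (by linarith)
  have h2 : Real.exp (-a) ≤ 1 := Real.exp_le_one_iff.mpr (by linarith)
  have h3 : Real.exp (a - b) ≤ 1 := Real.exp_le_one_iff.mpr (by linarith)
  have h4 : (a - b) + 1 ≤ Real.exp (a - b) := Real.add_one_le_exp _
  have h5 : Real.exp (-b) = Real.exp (-a) * Real.exp (a - b) := by
    rw [← Real.exp_add]; ring_nf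
  have h6 : 0 < Real.exp (-a) := Real.exp_pos _
  rw [abs_of_nonneg (by linarith), abs_of_nonpos (by linarith)]
  nlinarith

lemma sqrt_inv_diff_sq_le {a b δ : ℝ} (hδ : 0 < δ) (ha : δ ≤ a) (hb : δ ≤ b) :
    (1 / Real.sqrt a - 1 / Real.sqrt b) ^ 2 ≤ (a - b) ^ 2 / (4 * δ ^ 3) := by
  have ha0 : 0 < a := hδ.trans_le ha
  have hb0 : 0 < b := hδ.trans_le hb
  have hsa : 0 < Real.sqrt a := Real.sqrt_pos.mpr ha0
  have hsb : 0 < Real.sqrt b := Real.sqrt_pos.mpr hb0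
  have hsd : 0 < Real.sqrt δ := Real.sqrt_pos.mpr hδ
  have hda : Real.sqrt δ ≤ Real.sqrt a := Real.sqrt_le_sqrt ha
  have hdb : Real.sqrt δ ≤ Real.sqrt b := Real.sqrt_le_sqrt hb
  have h1 : (1 / Real.sqrt a - 1 / Real.sqrt b)
      = (Real.sqrt b - Real.sqrt a) / (Real.sqrt a * Real.sqrt b) := by
    field_simp
  rw [h1, div_pow]
  have hsq : (Real.sqrt b - Real.sqrt a) ^ 2 * (Real.sqrt b + Real.sqrt a) ^ 2 = (a - b) ^ 2 := by
    have hab : (Real.sqrt b - Real.sqrt a) * (Real.sqrt b + Real.sqrt a) = b - a := by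
      have hA := Real.sq_sqrt ha0.le
      have hB := Real.sq_sqrt hb0.le
      nlinarith
    nlinarith [hab]
  have hd2 : δ = Real.sqrt δ ^ 2 := (Real.sq_sqrt hδ.le).symm
  rw [div_le_div_iff₀ (by positivity) (by positivity)]
  have key : (Real.sqrt b - Real.sqrt a) ^ 2 * (4 * δ * (δ * δ))
      ≤ (a-b)^2 * (Real.sqrt a * Real.sqrt b)^2 := by
    have h2 : 4 * δ ≤ (Real.sqrt b + Real.sqrt a) ^ 2 := by nlinarith
    have h3 : δ * δ ≤ (Real.sqrt a * Real.sqrt b) ^ 2 := by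
      nlinarith [Real.sq_sqrt ha0.le, Real.sq_sqrt hb0.le, mul_le_mul ha hb hδ.le ha0.le]
    calc (Real.sqrt b - Real.sqrt a) ^ 2 * (4 * δ * (δ * δ))
        = ((Real.sqrt b - Real.sqrt a) ^ 2 * (4*δ)) * (δ * δ) := by ring
      _ ≤ ((Real.sqrt b - Real.sqrt a) ^ 2 * (Real.sqrt b + Real.sqrt a) ^ 2)
            * (Real.sqrt a * Real.sqrt b)^2 := by
          apply mul_le_mul _ h3 (by positivity) (by positivity)
          exact mul_le_mul_of_nonneg_left h2 (by positivity)
      _ = (a - b) ^ 2 * (Real.sqrt a * Real.sqrt b)^2 := by rw [hsq]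
  calc (Real.sqrt b - Real.sqrt a) ^ 2 * (4 * δ ^ 3)
      = (Real.sqrt b - Real.sqrt a) ^ 2 * (4 * δ * (δ * δ)) := by ring
    _ ≤ (a-b)^2 * (Real.sqrt a * Real.sqrt b)^2 := key

lemma euclNorm_sub_le {k : ℕ} (a b : Fin k → ℝ) :
    euclNorm (a - b) ≤ 2 * (euclNorm a + euclNorm b) := by
  have key : euclNormSq (a - b) ≤ (2 * (euclNorm a + euclNorm b)) ^ 2 := by
    have h := euclNormSq_sub_le a b
    have hA := sq_euclNorm a
    have hB := sq_euclNorm b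
    nlinarith [euclNorm_nonneg a, euclNorm_nonneg b]
  calc euclNorm (a - b) = Real.sqrt (euclNormSq (a - b)) := rfl
    _ ≤ Real.sqrt ((2 * (euclNorm a + euclNorm b)) ^ 2) := Real.sqrt_le_sqrt key
    _ = 2 * (euclNorm a + euclNorm b) := Real.sqrt_sq (by
          have := euclNorm_nonneg a; have := euclNorm_nonneg b; linarith)

lemma qform_diff_le {k : ℕ} (B : Matrix (Fin k) (Fin k) ℝ) (y₁ y₂ g : Fin k → ℝ) (r : ℝ)
    (hy₁ : euclNorm y₁ ≤ r) (hy₂ : euclNorm y₂ ≤ r) :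
    |dotProduct (y₁ - g) (B.mulVec (y₁ - g)) -
      dotProduct (y₂ - g) (B.mulVec (y₂ - g))| ≤
    (∑ i, ∑ j, |B i j|) * (4 * (r + euclNorm g)) * euclNorm (y₁ - y₂) := by
  have hgen : ∀ v₁ v₂ : Fin k → ℝ,
      dotProduct v₁ (B.mulVec v₁) - dotProduct v₂ (B.mulVec v₂)
      = dotProduct (v₁ - v₂) (B.mulVec v₁)
        + dotProduct v₂ (B.mulVec (v₁ - v₂)) := by
    intro v₁ v₂
    simp only [sub_dotProduct, Matrix.mulVec_sub, dotProduct_sub]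
    ring
  set v₁ := y₁ - g with hv₁def
  set v₂ := y₂ - g with hv₂def
  have hu : v₁ - v₂ = y₁ - y₂ := by ext i; simp [v₁, v₂]
  have hid := hgen v₁ v₂
  have hcB : 0 ≤ ∑ i, ∑ j, |B i j| :=
    Finset.sum_nonneg fun i _ => Finset.sum_nonneg fun j _ => abs_nonneg _
  have hr : 0 ≤ r := (euclNorm_nonneg y₁).trans hy₁
  have hv₁ : euclNorm v₁ ≤ 2 * (r + euclNorm g) := by
    calc euclNorm v₁ ≤ 2 * (euclNorm y₁ + euclNorm g) := euclNorm_sub_le y₁ g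
      _ ≤ 2 * (r + euclNorm g) := by nlinarith
  have hv₂ : euclNorm v₂ ≤ 2 * (r + euclNorm g) := by
    calc euclNorm v₂ ≤ 2 * (euclNorm y₂ + euclNorm g) := euclNorm_sub_le y₂ g
      _ ≤ 2 * (r + euclNorm g) := by nlinarith
  rw [hid, hu]
  have h1 := dotProduct_mulVec_le B (y₁ - y₂) v₁
  have h2 := dotProduct_mulVec_le B v₂ (y₁ - y₂)
  rw [← hu] at h1 h2 ⊢
  have hrg : 0 ≤ r + euclNorm g := by nlinarith [euclNorm_nonneg g]
  have hun : 0 ≤ euclNorm (v₁ - v₂) := euclNorm_nonneg _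
  calc |dotProduct (v₁ - v₂) (B.mulVec v₁) + dotProduct v₂ (B.mulVec (v₁ - v₂))|
      ≤ |dotProduct (v₁ - v₂) (B.mulVec v₁)|
        + |dotProduct v₂ (B.mulVec (v₁ - v₂))| := abs_add_le _ _
    _ ≤ (∑ i, ∑ j, |B i j|) * (euclNorm (v₁ - v₂) * euclNorm v₁)
        + (∑ i, ∑ j, |B i j|) * (euclNorm v₂ * euclNorm (v₁ - v₂)) := add_le_add h1 h2
    _ ≤ (∑ i, ∑ j, |B i j|) * (4 * (r + euclNorm g)) * euclNorm (v₁ - v₂) := by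
        nlinarith [mul_le_mul_of_nonneg_left (mul_le_mul_of_nonneg_left hv₁ hun) hcB,
          mul_le_mul_of_nonneg_left (mul_le_mul_of_nonneg_right hv₂ hun) hcB]

lemma exists_posmeasure_bound {X : Type*} [MeasurableSpace X] {L : ℕ}
    (μ : Measure X) (hμ : μ ≠ 0) (g : Fin L → X → ℝ) :
    ∃ K : ℕ, 0 < μ {Z | ∀ ℓ, g ℓ Z ≤ K} := by
  by_contra hc
  push_neg at hc
  have hzero : ∀ K : ℕ, μ {Z | ∀ ℓ, g ℓ Z ≤ K} = 0 := fun K => le_antisymm (hc K) zero_le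
  have hcover : Set.univ ⊆ ⋃ K : ℕ, {Z | ∀ ℓ, g ℓ Z ≤ (K : ℝ)} := by
    intro Z _
    obtain ⟨n, hn⟩ := exists_nat_ge (∑ ℓ, max (g ℓ Z) 0)
    refine Set.mem_iUnion.mpr ⟨n, fun ℓ => ?_⟩
    calc g ℓ Z ≤ max (g ℓ Z) 0 := le_max_left _ _
      _ ≤ ∑ ℓ', max (g ℓ' Z) 0 := Finset.single_le_sum
            (f := fun ℓ' => max (g ℓ' Z) 0) (fun ℓ' _ => le_max_right _ _) (Finset.mem_univ ℓ)
      _ ≤ n := hn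
  have huniv : μ Set.univ = 0 := by
    refine le_antisymm ?_ zero_le
    calc μ Set.univ ≤ μ (⋃ K : ℕ, {Z | ∀ ℓ, g ℓ Z ≤ (K : ℝ)}) := measure_mono hcover
      _ ≤ ∑' K : ℕ, μ {Z | ∀ ℓ, g ℓ Z ≤ (K : ℝ)} := measure_iUnion_le _
      _ = 0 := by simp [hzero]
  exact hμ (Measure.measure_univ_eq_zero.mp huniv)

lemma sum_mul_sum_le {L : ℕ} (a b : Fin L → ℝ) (ha : ∀ ℓ, 0 ≤ a ℓ) (hb : ∀ ℓ, 0 ≤ b ℓ) :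
    ∑ ℓ, a ℓ * b ℓ ≤ (∑ ℓ, a ℓ) * (∑ ℓ, b ℓ) := by
  rw [Finset.sum_mul]
  refine Finset.sum_le_sum fun ℓ _ => ?_
  exact mul_le_mul_of_nonneg_left (Finset.single_le_sum (fun ℓ' _ => hb ℓ') (Finset.mem_univ ℓ))
    (ha ℓ)

set_option maxHeartbeats 2000000 in
/-- (Theorem 3.1) The posterior measure is Lipschitz in the observation data with
respect to the Hellinger distance: for every `r > 0` there is `C = C(r) > 0` such that
for all data families bounded by `r`,
`d_Hell(μ_post¹, μ_post²) ≤ C ∑ℓ |Y₁ℓ − Y₂ℓ|`, where the posterior for data `Y` has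
density `Z ↦ exp(−∑ℓ Φℓ(Z;Yℓ)) / ∫ exp(−∑ℓ Φℓ(Z';Yℓ)) dμ_pr(Z')` w.r.t. the prior. -/
theorem posterior_lipschitz_in_data
    (N M L : ℕ) (hN : 1 ≤ N) (hM : 1 ≤ M) (hL : 1 ≤ L)
    (G : Fin L → (Fin N → ℝ) → (Fin M → ℝ)) (hG : ∀ ℓ, Continuous (G ℓ))
    (S : Fin L → Matrix (Fin M) (Fin M) ℝ) (hS : ∀ ℓ, (S ℓ).PosDef)
    (m : Fin N → ℝ) (σ : ℝ) (hσ : 0 < σ)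
    (μpr : Measure (Fin N → ℝ))
    (hμpr : μpr = volume.withDensity fun Z => ENNReal.ofReal
      ((2 * Real.pi * σ) ^ (-(N : ℝ) / 2) * Real.exp (-euclNormSq (Z - m) / (2 * σ))))
    (hGL2 : ∀ ℓ, Integrable (fun Z => euclNormSq (G ℓ Z)) μpr)
    (Φ : (Fin L → Fin M → ℝ) → Fin L → (Fin N → ℝ) → ℝ)
    (hΦ : ∀ Y ℓ Z, Φ Y ℓ Z =
      (1 / 2) * dotProduct (Y ℓ - G ℓ Z) ((S ℓ)⁻¹.mulVec (Y ℓ - G ℓ Z))) :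
    ∀ r > (0 : ℝ), ∃ C > (0 : ℝ), ∀ Y₁ Y₂ : Fin L → Fin M → ℝ,
      (∀ ℓ, max (euclNorm (Y₁ ℓ)) (euclNorm (Y₂ ℓ)) < r) →
      hellingerDist μpr
          (fun Z => Real.exp (-(∑ ℓ, Φ Y₁ ℓ Z)) /
            ∫ Z', Real.exp (-(∑ ℓ, Φ Y₁ ℓ Z')) ∂μpr)
          (fun Z => Real.exp (-(∑ ℓ, Φ Y₂ ℓ Z)) /
            ∫ Z', Real.exp (-(∑ ℓ, Φ Y₂ ℓ Z')) ∂μpr)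
        ≤ C * ∑ ℓ, euclNorm (Y₁ ℓ - Y₂ ℓ) := by
  intro r hr
  -- basic measure facts
  haveI hfin : IsFiniteMeasure μpr := by
    rw [hμpr]; exact gauss_finite N m σ _ hσ
  have hne : μpr ≠ 0 := by
    rw [hμpr]
    exact gauss_ne_zero N m σ _ hσ (Real.rpow_pos_of_pos (by positivity) _)
  -- notation
  set cB : Fin L → ℝ := fun ℓ => ∑ i, ∑ j, |(S ℓ)⁻¹ i j| with hcBdef
  have hcB : ∀ ℓ, 0 ≤ cB ℓ := fun ℓ =>
    Finset.sum_nonneg fun i _ => Finset.sum_nonneg fun j _ => abs_nonneg _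
  set g : Fin L → (Fin N → ℝ) → ℝ := fun ℓ Z => euclNorm (G ℓ Z) with hgdef
  have hgcont : ∀ ℓ, Continuous (g ℓ) := fun ℓ => continuous_euclNorm.comp (hG ℓ)
  have hgnn : ∀ ℓ Z, 0 ≤ g ℓ Z := fun ℓ Z => euclNorm_nonneg _
  have hgint : ∀ ℓ, Integrable (g ℓ) μpr := by
    intro ℓ
    refine Integrable.mono' ((integrable_const 1).add (hGL2 ℓ))
      (hgcont ℓ).aestronglyMeasurable (ae_of_all _ fun Z => ?_)
    rw [Real.norm_eq_abs, abs_of_nonneg (hgnn ℓ Z)]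
    exact euclNorm_le_one_add_sq _
  have hg2int : ∀ ℓ, Integrable (fun Z => g ℓ Z ^ 2) μpr := by
    intro ℓ
    have h : (fun Z => g ℓ Z ^ 2) = fun Z => euclNormSq (G ℓ Z) :=
      funext fun Z => sq_euclNorm _
    rw [h]; exact hGL2 ℓ
  -- the weight function W
  set W : (Fin N → ℝ) → ℝ := fun Z => ∑ ℓ, 2 * cB ℓ * (r + g ℓ Z) with hWdef
  have hWnn : ∀ Z, 0 ≤ W Z := fun Z => Finset.sum_nonneg fun ℓ _ => by
    have := hgnn ℓ Z; have := hcB ℓ; nlinarith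
  have hWcont : Continuous W :=
    continuous_finset_sum _ fun ℓ _ => continuous_const.mul (continuous_const.add (hgcont ℓ))
  have hWint : Integrable W μpr :=
    integrable_finset_sum _ fun ℓ _ => (((integrable_const r).add (hgint ℓ)).const_mul _)
  have hW2int : Integrable (fun Z => W Z ^ 2) μpr := by
    have hterm : ∀ ℓ : Fin L,
        Integrable (fun Z => (2 * cB ℓ) ^ 2 * (2 * r ^ 2 + 2 * g ℓ Z ^ 2)) μpr := fun ℓ =>
      ((integrable_const (2 * r ^ 2)).add ((hg2int ℓ).const_mul 2)).const_mul _
    have hsum : Integrable (fun Z => ∑ ℓ, (2 * cB ℓ) ^ 2 * (2 * r ^ 2 + 2 * g ℓ Z ^ 2)) μpr :=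
      integrable_finset_sum _ fun ℓ _ => hterm ℓ
    have hbig : Integrable
        (fun Z => (L : ℝ) * ∑ ℓ, (2 * cB ℓ) ^ 2 * (2 * r ^ 2 + 2 * g ℓ Z ^ 2)) μpr :=
      hsum.const_mul _
    refine hbig.mono' ((hWcont.pow 2).aestronglyMeasurable) (ae_of_all _ fun Z => ?_)
    rw [Real.norm_eq_abs, abs_of_nonneg (sq_nonneg _)]
    calc W Z ^ 2 ≤ (Finset.univ.card : ℝ) * ∑ ℓ, (2 * cB ℓ * (r + g ℓ Z)) ^ 2 :=
          sq_sum_le_card_mul_sum_sq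
      _ ≤ (L : ℝ) * ∑ ℓ, (2 * cB ℓ) ^ 2 * (2 * r ^ 2 + 2 * g ℓ Z ^ 2) := by
          rw [Finset.card_univ, Fintype.card_fin]
          refine mul_le_mul_of_nonneg_left (Finset.sum_le_sum fun ℓ _ => ?_) (Nat.cast_nonneg _)
          have h1 := hgnn ℓ Z
          nlinarith [sq_nonneg (r - g ℓ Z), sq_nonneg (cB ℓ)]
  -- nonnegativity and continuity of the misfits
  have hΦnn : ∀ Y ℓ Z, 0 ≤ Φ Y ℓ Z := by
    intro Y ℓ Z
    rw [hΦ]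
    exact mul_nonneg (by norm_num) (dotProduct_mulVec_nonneg ((hS ℓ).inv).posSemidef _)
  have hφnn : ∀ Y Z, 0 ≤ ∑ ℓ, Φ Y ℓ Z := fun Y Z =>
    Finset.sum_nonneg fun ℓ _ => hΦnn Y ℓ Z
  have hφcont : ∀ Y, Continuous fun Z => ∑ ℓ, Φ Y ℓ Z := by
    intro Y
    refine continuous_finset_sum _ fun ℓ _ => ?_
    have h : Φ Y ℓ = fun Z =>
        (1/2) * dotProduct (Y ℓ - G ℓ Z) ((S ℓ)⁻¹.mulVec (Y ℓ - G ℓ Z)) :=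
      funext fun Z => hΦ Y ℓ Z
    rw [h]
    exact continuous_const.mul ((continuous_qform _).comp (continuous_const.sub (hG ℓ)))
  have hfint : ∀ Y, Integrable (fun Z => Real.exp (-(∑ ℓ, Φ Y ℓ Z))) μpr := by
    intro Y
    refine Integrable.mono' (integrable_const 1)
      (((hφcont Y).neg.rexp).aestronglyMeasurable) (ae_of_all _ fun Z => ?_)
    rw [Real.norm_eq_abs, abs_of_nonneg (Real.exp_nonneg _)]
    exact Real.exp_le_one_iff.mpr (by linarith [hφnn Y Z])
  -- a set of positive prior measure where G is bounded
  obtain ⟨K, hK⟩ := exists_posmeasure_bound μpr hne (fun ℓ Z => euclNormSq (G ℓ Z))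
  set A : Set (Fin N → ℝ) := {Z | ∀ ℓ, euclNormSq (G ℓ Z) ≤ K} with hAdef
  have hAmeas : MeasurableSet A := by
    have h : A = ⋂ ℓ, (fun Z => euclNormSq (G ℓ Z)) ⁻¹' Set.Iic (K : ℝ) := by
      ext Z; simp [hAdef, Set.mem_iInter]
    rw [h]
    exact MeasurableSet.iInter fun ℓ =>
      ((continuous_euclNormSq.comp (hG ℓ)).measurable) measurableSet_Iic
  set cK : ℝ := ∑ ℓ : Fin L, (1/2) * cB ℓ * (2 * r ^ 2 + 2 * K) with hcKdef
  -- uniform bound for the misfit on A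
  have hφA : ∀ Y, (∀ ℓ, euclNorm (Y ℓ) ≤ r) → ∀ Z ∈ A, ∑ ℓ, Φ Y ℓ Z ≤ cK := by
    intro Y hY Z hZ
    refine Finset.sum_le_sum fun ℓ _ => ?_
    rw [hΦ]
    have hb := dotProduct_mulVec_le ((S ℓ)⁻¹) (Y ℓ - G ℓ Z) (Y ℓ - G ℓ Z)
    have hv : euclNorm (Y ℓ - G ℓ Z) * euclNorm (Y ℓ - G ℓ Z) ≤ 2 * r ^ 2 + 2 * K := by
      have h1 : euclNorm (Y ℓ - G ℓ Z) * euclNorm (Y ℓ - G ℓ Z)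
          = euclNormSq (Y ℓ - G ℓ Z) := by rw [← sq_euclNorm]; ring
      rw [h1]
      have h2 := euclNormSq_sub_le (Y ℓ) (G ℓ Z)
      have h3 : euclNormSq (Y ℓ) ≤ r ^ 2 := by
        rw [← sq_euclNorm]
        exact pow_le_pow_left₀ (euclNorm_nonneg _) (hY ℓ) 2
      have h4 : euclNormSq (G ℓ Z) ≤ K := hZ ℓ
      linarith
    have h5 : dotProduct (Y ℓ - G ℓ Z) ((S ℓ)⁻¹.mulVec (Y ℓ - G ℓ Z))
        ≤ cB ℓ * (2 * r ^ 2 + 2 * K) := by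
      calc dotProduct (Y ℓ - G ℓ Z) ((S ℓ)⁻¹.mulVec (Y ℓ - G ℓ Z))
          ≤ |dotProduct (Y ℓ - G ℓ Z) ((S ℓ)⁻¹.mulVec (Y ℓ - G ℓ Z))| := le_abs_self _
        _ ≤ cB ℓ * (euclNorm (Y ℓ - G ℓ Z) * euclNorm (Y ℓ - G ℓ Z)) := hb
        _ ≤ cB ℓ * (2 * r ^ 2 + 2 * K) := mul_le_mul_of_nonneg_left hv (hcB ℓ)
    linarith
  -- lower bound for normalizing constants
  set δ : ℝ := Real.exp (-cK) * (μpr A).toReal with hδdef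
  have hδ : 0 < δ := by
    apply mul_pos (Real.exp_pos _)
    exact ENNReal.toReal_pos hK.ne' (measure_lt_top _ _).ne
  have hIlb : ∀ Y, (∀ ℓ, euclNorm (Y ℓ) ≤ r) →
      δ ≤ ∫ Z, Real.exp (-(∑ ℓ, Φ Y ℓ Z)) ∂μpr := by
    intro Y hY
    have hle : (A.indicator fun _ => Real.exp (-cK)) ≤ fun Z => Real.exp (-(∑ ℓ, Φ Y ℓ Z)) := by
      intro Z
      by_cases hZ : Z ∈ A
      · rw [Set.indicator_of_mem hZ]
        exact Real.exp_le_exp.mpr (by linarith [hφA Y hY Z hZ])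
      · rw [Set.indicator_of_notMem hZ]
        exact (Real.exp_pos _).le
    have h := integral_mono ((integrable_const (Real.exp (-cK))).indicator hAmeas) (hfint Y) hle
    rwa [integral_indicator_const _ hAmeas, smul_eq_mul, mul_comm] at h
  set mass : ℝ := (μpr Set.univ).toReal with hmassdef
  have hmass : 0 ≤ mass := ENNReal.toReal_nonneg
  have hIub : ∀ Y, (∫ Z, Real.exp (-(∑ ℓ, Φ Y ℓ Z)) ∂μpr) ≤ mass := by
    intro Y
    have h := integral_mono (hfint Y) (integrable_const 1)
      (fun Z => Real.exp_le_one_iff.mpr (by linarith [hφnn Y Z]))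
    rwa [integral_const, smul_eq_mul, mul_one] at h
  -- the constant
  set E : ℝ := (∫ Z, W Z ^ 2 ∂μpr) / (2 * δ) + mass * (∫ Z, W Z ∂μpr) ^ 2 / (2 * δ ^ 3)
    with hEdef
  have hWi_nn : 0 ≤ ∫ Z, W Z ∂μpr := integral_nonneg hWnn
  have hW2i_nn : 0 ≤ ∫ Z, W Z ^ 2 ∂μpr := integral_nonneg fun Z => sq_nonneg _
  have hE : 0 ≤ E := by
    apply add_nonneg
    · exact div_nonneg hW2i_nn (by positivity)
    · exact div_nonneg (by positivity) (by positivity)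
  refine ⟨Real.sqrt (E / 2) + 1, by positivity, ?_⟩
  intro Y₁ Y₂ hY
  have hY₁ : ∀ ℓ, euclNorm (Y₁ ℓ) ≤ r := fun ℓ => (le_max_left _ _).trans (hY ℓ).le
  have hY₂ : ∀ ℓ, euclNorm (Y₂ ℓ) ≤ r := fun ℓ => (le_max_right _ _).trans (hY ℓ).le
  set T : ℝ := ∑ ℓ, euclNorm (Y₁ ℓ - Y₂ ℓ) with hTdef
  have hT : 0 ≤ T := Finset.sum_nonneg fun ℓ _ => euclNorm_nonneg _
  set I₁ : ℝ := ∫ Z', Real.exp (-(∑ ℓ, Φ Y₁ ℓ Z')) ∂μpr with hI₁def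
  set I₂ : ℝ := ∫ Z', Real.exp (-(∑ ℓ, Φ Y₂ ℓ Z')) ∂μpr with hI₂def
  have hI₁lb : δ ≤ I₁ := hIlb Y₁ hY₁
  have hI₂lb : δ ≤ I₂ := hIlb Y₂ hY₂
  have hI₁pos : 0 < I₁ := hδ.trans_le hI₁lb
  have hI₂pos : 0 < I₂ := hδ.trans_le hI₂lb
  have hI₂ub : I₂ ≤ mass := hIub Y₂
  -- pointwise Lipschitz estimate for the misfits
  have hφdiff : ∀ Z, |(∑ ℓ, Φ Y₁ ℓ Z) - (∑ ℓ, Φ Y₂ ℓ Z)| ≤ W Z * T := by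
    intro Z
    rw [← Finset.sum_sub_distrib]
    refine (Finset.abs_sum_le_sum_abs _ _).trans ?_
    have h2 : ∀ ℓ, |Φ Y₁ ℓ Z - Φ Y₂ ℓ Z|
        ≤ (2 * cB ℓ * (r + g ℓ Z)) * euclNorm (Y₁ ℓ - Y₂ ℓ) := by
      intro ℓ
      rw [hΦ, hΦ, ← mul_sub, abs_mul]
      have hq := qform_diff_le ((S ℓ)⁻¹) (Y₁ ℓ) (Y₂ ℓ) (G ℓ Z) r (hY₁ ℓ) (hY₂ ℓ)
      rw [abs_of_nonneg (by norm_num : (0:ℝ) ≤ 1/2)]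
      calc (1/2) * |dotProduct (Y₁ ℓ - G ℓ Z) ((S ℓ)⁻¹.mulVec (Y₁ ℓ - G ℓ Z)) -
              dotProduct (Y₂ ℓ - G ℓ Z) ((S ℓ)⁻¹.mulVec (Y₂ ℓ - G ℓ Z))|
          ≤ (1/2) * (cB ℓ * (4 * (r + g ℓ Z)) * euclNorm (Y₁ ℓ - Y₂ ℓ)) :=
            mul_le_mul_of_nonneg_left hq (by norm_num)
        _ = (2 * cB ℓ * (r + g ℓ Z)) * euclNorm (Y₁ ℓ - Y₂ ℓ) := by ring
    refine (Finset.sum_le_sum fun ℓ _ => h2 ℓ).trans ?_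
    exact sum_mul_sum_le _ _
      (fun ℓ => by have := hcB ℓ; have := hgnn ℓ Z; nlinarith)
      (fun ℓ => euclNorm_nonneg _)
  -- bound on |I₁ - I₂|
  have hIdiff : |I₁ - I₂| ≤ T * ∫ Z, W Z ∂μpr := by
    have h1 : I₁ - I₂
        = ∫ Z, (Real.exp (-(∑ ℓ, Φ Y₁ ℓ Z)) - Real.exp (-(∑ ℓ, Φ Y₂ ℓ Z))) ∂μpr := by
      rw [hI₁def, hI₂def, integral_sub (hfint Y₁) (hfint Y₂)]
    rw [h1]
    calc |∫ Z, (Real.exp (-(∑ ℓ, Φ Y₁ ℓ Z)) - Real.exp (-(∑ ℓ, Φ Y₂ ℓ Z))) ∂μpr|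
        ≤ ∫ Z, |Real.exp (-(∑ ℓ, Φ Y₁ ℓ Z)) - Real.exp (-(∑ ℓ, Φ Y₂ ℓ Z))| ∂μpr := by
          simpa [Real.norm_eq_abs] using
            norm_integral_le_integral_norm (μ := μpr)
              (f := fun Z => Real.exp (-(∑ ℓ, Φ Y₁ ℓ Z)) - Real.exp (-(∑ ℓ, Φ Y₂ ℓ Z)))
      _ ≤ ∫ Z, W Z * T ∂μpr := by
          refine integral_mono (((hfint Y₁).sub (hfint Y₂)).abs) (hWint.mul_const T)
            fun Z => ?_
          exact (exp_neg_lipschitz (hφnn Y₁ Z) (hφnn Y₂ Z)).trans (hφdiff Z)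
      _ = T * ∫ Z, W Z ∂μpr := by rw [integral_mul_const]; ring
  -- pointwise bound on the squared difference of the sqrt posterior densities
  have hkey : ∀ Z,
      (Real.sqrt (Real.exp (-(∑ ℓ, Φ Y₁ ℓ Z)) / I₁)
        - Real.sqrt (Real.exp (-(∑ ℓ, Φ Y₂ ℓ Z)) / I₂)) ^ 2
      ≤ (T ^ 2 / (2 * δ)) * W Z ^ 2
        + (T ^ 2 * (∫ Z', W Z' ∂μpr) ^ 2 / (2 * δ ^ 3)) * Real.exp (-(∑ ℓ, Φ Y₂ ℓ Z)) := by
    intro Z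
    have hs₁ : Real.sqrt (Real.exp (-(∑ ℓ, Φ Y₁ ℓ Z)) / I₁)
        = Real.exp (-(∑ ℓ, Φ Y₁ ℓ Z) / 2) * (1 / Real.sqrt I₁) := by
      rw [Real.sqrt_div (Real.exp_nonneg _), Real.exp_half]
      ring
    have hs₂ : Real.sqrt (Real.exp (-(∑ ℓ, Φ Y₂ ℓ Z)) / I₂)
        = Real.exp (-(∑ ℓ, Φ Y₂ ℓ Z) / 2) * (1 / Real.sqrt I₂) := by
      rw [Real.sqrt_div (Real.exp_nonneg _), Real.exp_half]
      ring
    rw [hs₁, hs₂]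
    set e₁ : ℝ := Real.exp (-(∑ ℓ, Φ Y₁ ℓ Z) / 2) with he₁def
    set e₂ : ℝ := Real.exp (-(∑ ℓ, Φ Y₂ ℓ Z) / 2) with he₂def
    set a : ℝ := 1 / Real.sqrt I₁ with hadef
    set b : ℝ := 1 / Real.sqrt I₂ with hbdef
    have hsq2 : (e₁ * a - e₂ * b) ^ 2
        ≤ 2 * (a ^ 2 * (e₁ - e₂) ^ 2) + 2 * (e₂ ^ 2 * (a - b) ^ 2) := by
      nlinarith [sq_nonneg (a * (e₁ - e₂) - e₂ * (a - b))]
    have hsqI : Real.sqrt I₁ ^ 2 = I₁ := Real.sq_sqrt hI₁pos.le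
    have hsqIpos : 0 < Real.sqrt I₁ := Real.sqrt_pos.mpr hI₁pos
    have ha2 : a ^ 2 = 1 / I₁ := by
      rw [hadef, div_pow, one_pow, hsqI]
    have he₂2 : e₂ ^ 2 = Real.exp (-(∑ ℓ, Φ Y₂ ℓ Z)) := by
      rw [he₂def, sq, ← Real.exp_add]
      ring_nf
    have hediff : (e₁ - e₂) ^ 2 ≤ (1/4) * (W Z * T) ^ 2 := by
      have h1 : |e₁ - e₂| ≤ (1/2) * |(∑ ℓ, Φ Y₁ ℓ Z) - (∑ ℓ, Φ Y₂ ℓ Z)| := by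
        have h2 : e₁ = Real.exp (-((∑ ℓ, Φ Y₁ ℓ Z) / 2)) := by rw [he₁def, neg_div]
        have h3 : e₂ = Real.exp (-((∑ ℓ, Φ Y₂ ℓ Z) / 2)) := by rw [he₂def, neg_div]
        rw [h2, h3]
        have h4 := exp_neg_lipschitz (a := (∑ ℓ, Φ Y₁ ℓ Z) / 2) (b := (∑ ℓ, Φ Y₂ ℓ Z) / 2)
          (by linarith [hφnn Y₁ Z]) (by linarith [hφnn Y₂ Z])
        refine h4.trans (le_of_eq ?_)
        rw [div_sub_div_same, abs_div, abs_of_nonneg (by norm_num : (0:ℝ) ≤ 2)]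
        ring
      have h5 : |e₁ - e₂| ≤ (1/2) * (W Z * T) :=
        h1.trans (mul_le_mul_of_nonneg_left (hφdiff Z) (by norm_num))
      calc (e₁ - e₂) ^ 2 = |e₁ - e₂| ^ 2 := (sq_abs _).symm
        _ ≤ ((1/2) * (W Z * T)) ^ 2 := pow_le_pow_left₀ (abs_nonneg _) h5 2
        _ = (1/4) * (W Z * T) ^ 2 := by ring
    have habdiff : (a - b) ^ 2 ≤ (I₁ - I₂) ^ 2 / (4 * δ ^ 3) :=
      sqrt_inv_diff_sq_le hδ hI₁lb hI₂lb
    have hI12 : (I₁ - I₂) ^ 2 ≤ (T * ∫ Z', W Z' ∂μpr) ^ 2 := by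
      calc (I₁ - I₂) ^ 2 = |I₁ - I₂| ^ 2 := (sq_abs _).symm
        _ ≤ (T * ∫ Z', W Z' ∂μpr) ^ 2 := pow_le_pow_left₀ (abs_nonneg _) hIdiff 2
    have hbound1 : a ^ 2 * (e₁ - e₂) ^ 2 ≤ (1 / δ) * ((1/4) * (W Z * T) ^ 2) := by
      rw [ha2]
      exact mul_le_mul (one_div_le_one_div_of_le hδ hI₁lb) hediff (sq_nonneg _)
        (by positivity)
    have hbound2 : e₂ ^ 2 * (a - b) ^ 2
        ≤ Real.exp (-(∑ ℓ, Φ Y₂ ℓ Z)) * ((T * ∫ Z', W Z' ∂μpr) ^ 2 / (4 * δ ^ 3)) := by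
      rw [he₂2]
      refine mul_le_mul_of_nonneg_left ?_ (Real.exp_nonneg _)
      exact habdiff.trans
        ((div_le_div_iff_of_pos_right (show (0:ℝ) < 4 * δ ^ 3 by positivity)).mpr hI12)
    have hfinal : 2 * (a ^ 2 * (e₁ - e₂) ^ 2) + 2 * (e₂ ^ 2 * (a - b) ^ 2)
        ≤ (T ^ 2 / (2 * δ)) * W Z ^ 2
          + (T ^ 2 * (∫ Z', W Z' ∂μpr) ^ 2 / (2 * δ ^ 3)) * Real.exp (-(∑ ℓ, Φ Y₂ ℓ Z)) := by
      have e1 : 2 * ((1 / δ) * ((1/4) * (W Z * T) ^ 2)) = (T ^ 2 / (2 * δ)) * W Z ^ 2 := by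
        field_simp; ring
      have e2 : 2 * (Real.exp (-(∑ ℓ, Φ Y₂ ℓ Z)) * ((T * ∫ Z', W Z' ∂μpr) ^ 2 / (4 * δ ^ 3)))
          = (T ^ 2 * (∫ Z', W Z' ∂μpr) ^ 2 / (2 * δ ^ 3)) * Real.exp (-(∑ ℓ, Φ Y₂ ℓ Z)) := by
        field_simp; ring
      linarith [mul_le_mul_of_nonneg_left hbound1 (by norm_num : (0:ℝ) ≤ 2),
        mul_le_mul_of_nonneg_left hbound2 (by norm_num : (0:ℝ) ≤ 2), e1.le, e2.le, e1.ge, e2.ge]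
    exact hsq2.trans hfinal
  -- integrate the pointwise bound
  have hRHSint : Integrable (fun Z => (T ^ 2 / (2 * δ)) * W Z ^ 2
      + (T ^ 2 * (∫ Z', W Z' ∂μpr) ^ 2 / (2 * δ ^ 3)) * Real.exp (-(∑ ℓ, Φ Y₂ ℓ Z))) μpr :=
    (hW2int.const_mul _).add ((hfint Y₂).const_mul _)
  have hmain : (∫ Z, (Real.sqrt (Real.exp (-(∑ ℓ, Φ Y₁ ℓ Z)) / I₁)
        - Real.sqrt (Real.exp (-(∑ ℓ, Φ Y₂ ℓ Z)) / I₂)) ^ 2 ∂μpr) ≤ E * T ^ 2 := by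
    refine (integral_mono_of_nonneg (ae_of_all _ fun Z => sq_nonneg _) hRHSint
      (ae_of_all _ hkey)).trans ?_
    rw [integral_add (hW2int.const_mul _) ((hfint Y₂).const_mul _),
      integral_const_mul, integral_const_mul]
    have h1 : (T ^ 2 * (∫ Z', W Z' ∂μpr) ^ 2 / (2 * δ ^ 3)) * I₂
        ≤ (T ^ 2 * (∫ Z', W Z' ∂μpr) ^ 2 / (2 * δ ^ 3)) * mass :=
      mul_le_mul_of_nonneg_left hI₂ub (by positivity)
    have h2 : E * T ^ 2 = (T ^ 2 / (2 * δ)) * (∫ Z, W Z ^ 2 ∂μpr)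
        + (T ^ 2 * (∫ Z', W Z' ∂μpr) ^ 2 / (2 * δ ^ 3)) * mass := by
      rw [hEdef]; field_simp
    rw [h2]
    have h3 : (∫ Z', Real.exp (-(∑ ℓ, Φ Y₂ ℓ Z')) ∂μpr) = I₂ := hI₂def.symm
    linarith [h1]
  -- conclude
  show Real.sqrt ((1/2) * ∫ Z, (Real.sqrt (Real.exp (-(∑ ℓ, Φ Y₁ ℓ Z)) / I₁)
      - Real.sqrt (Real.exp (-(∑ ℓ, Φ Y₂ ℓ Z)) / I₂)) ^ 2 ∂μpr)
    ≤ (Real.sqrt (E / 2) + 1) * T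
  calc Real.sqrt ((1/2) * ∫ Z, (Real.sqrt (Real.exp (-(∑ ℓ, Φ Y₁ ℓ Z)) / I₁)
        - Real.sqrt (Real.exp (-(∑ ℓ, Φ Y₂ ℓ Z)) / I₂)) ^ 2 ∂μpr)
      ≤ Real.sqrt ((E / 2) * T ^ 2) := by
        apply Real.sqrt_le_sqrt
        have := hmain
        nlinarith
    _ = Real.sqrt (E / 2) * T := by
        rw [Real.sqrt_mul (by positivity) (T ^ 2), Real.sqrt_sq hT]
    _ ≤ (Real.sqrt (E / 2) + 1) * T := by
        apply mul_le_mul_of_nonneg_right _ hT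
        linarith [Real.sqrt_nonneg (E / 2)]
end

section
/- Let (X, 𝒜, μ₀) be a probability space, and let Φ₁, Φ₂ : X → [0, ∞) be measurable with C₁ = ∫_X e^{−Φ₁} dμ₀ > 0 and C₂ = ∫_X e^{−Φ₂} dμ₀ > 0. Let μ₁ and μ₂ be the probability measures with dμ_i/dμ₀ = e^{−Φ_i}/C_i, i = 1, 2. Then d_Hell(μ₁, μ₂)² ≤ (1/(4C₁)) ∫_X (Φ₁ − Φ₂)² dμ₀ + C₂ (C₁^{−1/2} − C₂^{−1/2})². -/
open MeasureTheory Real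

private lemma exp_diff_le_aux {u v : ℝ} (hu : 0 ≤ u) (huv : u ≤ v) :
    Real.exp (-u) - Real.exp (-v) ≤ v - u := by
  have e : Real.exp (-v) = Real.exp (-u) * Real.exp (u - v) := by
    rw [← Real.exp_add]; ring_nf
  nlinarith [Real.add_one_le_exp (u - v), Real.exp_le_one_iff.mpr (neg_nonpos.mpr hu),
    Real.exp_pos (-u)]

private lemma exp_diff_sq_le {u v : ℝ} (hu : 0 ≤ u) (hv : 0 ≤ v) :
    (Real.exp (-u) - Real.exp (-v)) ^ 2 ≤ (u - v) ^ 2 := by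
  rcases le_total u v with h | h
  · have h1 := exp_diff_le_aux hu h
    have h2 : Real.exp (-v) ≤ Real.exp (-u) := Real.exp_le_exp.mpr (by linarith)
    nlinarith
  · have h1 := exp_diff_le_aux hv h
    have h2 : Real.exp (-u) ≤ Real.exp (-v) := Real.exp_le_exp.mpr (by linarith)
    nlinarith

private lemma exp_half_diff_sq {s t : ℝ} (hs : 0 ≤ s) (ht : 0 ≤ t) :
    (Real.exp (-s / 2) - Real.exp (-t / 2)) ^ 2 ≤ ((s - t) / 2) ^ 2 := by
  have h := exp_diff_sq_le (u := s / 2) (v := t / 2) (by linarith) (by linarith)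
  have e1 : -s / 2 = -(s / 2) := by ring
  have e2 : -t / 2 = -(t / 2) := by ring
  rw [e1, e2]
  calc (Real.exp (-(s / 2)) - Real.exp (-(t / 2))) ^ 2 ≤ (s / 2 - t / 2) ^ 2 := h
    _ = ((s - t) / 2) ^ 2 := by ring

private lemma sqrt_density_eq (Φ : ℝ) (C : ℝ) (hC : 0 < C) :
    Real.sqrt (Real.exp (-Φ) / C) = Real.exp (-Φ / 2) * (C ^ (-(1:ℝ)/2)) := by
  rw [Real.sqrt_div (Real.exp_pos _).le, ← Real.exp_half, Real.sqrt_eq_rpow,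
    div_eq_mul_inv, ← Real.rpow_neg hC.le]
  norm_num

set_option maxHeartbeats 800000 in
/-- Core estimate of the well-posedness theorem: for Gibbs-type measures `μᵢ` with
densities `e^{−Φᵢ}/Cᵢ` with respect to a probability measure `μ₀`,
`d_Hell(μ₁, μ₂)² ≤ (1/(4C₁)) ∫ (Φ₁ − Φ₂)² dμ₀ + C₂ (C₁^{−1/2} − C₂^{−1/2})²`
(the integral on the right possibly infinite). -/
theorem hellinger_sq_le_misfit_bound
    {X : Type*} [MeasurableSpace X] (μ₀ : Measure X) [IsProbabilityMeasure μ₀]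
    (Φ₁ Φ₂ : X → ℝ) (h₁ : Measurable Φ₁) (h₂ : Measurable Φ₂)
    (h₁0 : ∀ x, 0 ≤ Φ₁ x) (h₂0 : ∀ x, 0 ≤ Φ₂ x)
    (C₁ C₂ : ℝ)
    (hC₁ : C₁ = ∫ x, Real.exp (-Φ₁ x) ∂μ₀) (hC₁pos : 0 < C₁)
    (hC₂ : C₂ = ∫ x, Real.exp (-Φ₂ x) ∂μ₀) (hC₂pos : 0 < C₂)
    (μ₁ μ₂ : Measure X)
    (hμ₁ : μ₁ = μ₀.withDensity fun x => ENNReal.ofReal (Real.exp (-Φ₁ x) / C₁))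
    (hμ₂ : μ₂ = μ₀.withDensity fun x => ENNReal.ofReal (Real.exp (-Φ₂ x) / C₂)) :
    ENNReal.ofReal
        ((hellingerDist μ₀ (fun x => Real.exp (-Φ₁ x) / C₁)
            (fun x => Real.exp (-Φ₂ x) / C₂)) ^ 2) ≤
      ENNReal.ofReal (1 / (4 * C₁)) *
          (∫⁻ x, ENNReal.ofReal ((Φ₁ x - Φ₂ x) ^ 2) ∂μ₀) +
        ENNReal.ofReal (C₂ * (C₁ ^ (-(1 : ℝ) / 2) - C₂ ^ (-(1 : ℝ) / 2)) ^ 2) := by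
  set k₁ : ℝ := C₁ ^ (-(1:ℝ)/2) with hk₁
  set k₂ : ℝ := C₂ ^ (-(1:ℝ)/2) with hk₂
  set K : ℝ := (k₁ - k₂) ^ 2 with hK
  set h : X → ℝ := fun x =>
    (Real.sqrt (Real.exp (-Φ₁ x) / C₁) - Real.sqrt (Real.exp (-Φ₂ x) / C₂)) ^ 2 with hh
  clear_value k₁ k₂ K h
  have hs₁ : (0:ℝ) < Real.sqrt C₁ := Real.sqrt_pos.mpr hC₁pos
  have hs₂ : (0:ℝ) < Real.sqrt C₂ := Real.sqrt_pos.mpr hC₂pos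
  have hk₁' : k₁ = 1 / Real.sqrt C₁ := by
    rw [hk₁, Real.sqrt_eq_rpow, neg_div, Real.rpow_neg hC₁pos.le]
    exact (one_div _).symm
  have hk₂' : k₂ = 1 / Real.sqrt C₂ := by
    rw [hk₂, Real.sqrt_eq_rpow, neg_div, Real.rpow_neg hC₂pos.le]
    exact (one_div _).symm
  have hk₁pos : 0 < k₁ := by rw [hk₁']; positivity
  have hk₂pos : 0 < k₂ := by rw [hk₂']; positivity
  have hk₁sq : k₁ ^ 2 = 1 / C₁ := by
    rw [hk₁', div_pow, one_pow, Real.sq_sqrt hC₁pos.le]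
  -- pointwise key inequality
  have key : ∀ x, (1/2 : ℝ) * h x ≤
      1 / (4 * C₁) * (Φ₁ x - Φ₂ x) ^ 2 + K * Real.exp (-Φ₂ x) := by
    intro x
    have e₁ := sqrt_density_eq (Φ₁ x) C₁ hC₁pos
    have e₂ := sqrt_density_eq (Φ₂ x) C₂ hC₂pos
    have hd := exp_half_diff_sq (h₁0 x) (h₂0 x)
    set E := Real.exp (-Φ₁ x / 2) with hE
    set F := Real.exp (-Φ₂ x / 2) with hF
    have hFsq : F ^ 2 = Real.exp (-Φ₂ x) := by
      rw [hF, sq, ← Real.exp_add]; ring_nf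
    have hhx : h x = (E * k₁ - F * k₂) ^ 2 := by
      simp only [hh, e₁, e₂, hk₁, hk₂]
    rw [hhx]
    have step1 : (1/2 : ℝ) * (E * k₁ - F * k₂) ^ 2 ≤
        k₁ ^ 2 * (E - F) ^ 2 + K * F ^ 2 := by
      rw [hK]
      nlinarith [sq_nonneg (k₁ * (E - F) - (k₁ - k₂) * F)]
    have step2 : k₁ ^ 2 * (E - F) ^ 2 ≤ 1 / (4 * C₁) * (Φ₁ x - Φ₂ x) ^ 2 := by
      rw [hk₁sq]
      have h4 : (0:ℝ) ≤ 1 / C₁ := by positivity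
      calc 1 / C₁ * (E - F) ^ 2 ≤ 1 / C₁ * ((Φ₁ x - Φ₂ x) / 2) ^ 2 :=
            mul_le_mul_of_nonneg_left hd h4
        _ = 1 / (4 * C₁) * (Φ₁ x - Φ₂ x) ^ 2 := by
            rw [show (1:ℝ)/(4*C₁) = 1/4 * (1/C₁) from (one_div_mul_one_div 4 C₁).symm]; ring
    rw [hFsq] at step1
    linarith
  -- integrability
  have hmf : Measurable fun x => Real.sqrt (Real.exp (-Φ₁ x) / C₁) :=
    (((measurable_exp.comp h₁.neg).div_const C₁)).sqrt
  have hmg : Measurable fun x => Real.sqrt (Real.exp (-Φ₂ x) / C₂) :=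
    (((measurable_exp.comp h₂.neg).div_const C₂)).sqrt
  have hmh : Measurable h := by rw [hh]; exact (hmf.sub hmg).pow_const 2
  have hbd : ∀ x, ‖h x‖ ≤ (k₁ + k₂) ^ 2 := by
    intro x
    have e₁ := sqrt_density_eq (Φ₁ x) C₁ hC₁pos
    have e₂ := sqrt_density_eq (Φ₂ x) C₂ hC₂pos
    have hE1 : Real.exp (-Φ₁ x / 2) ≤ 1 := by
      apply Real.exp_le_one_iff.mpr; have := h₁0 x; linarith
    have hE0 : 0 < Real.exp (-Φ₁ x / 2) := Real.exp_pos _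
    have hF1 : Real.exp (-Φ₂ x / 2) ≤ 1 := by
      apply Real.exp_le_one_iff.mpr; have := h₂0 x; linarith
    have hF0 : 0 < Real.exp (-Φ₂ x / 2) := Real.exp_pos _
    have hhx : h x = (Real.exp (-Φ₁ x / 2) * k₁ - Real.exp (-Φ₂ x / 2) * k₂) ^ 2 := by
      simp only [hh, e₁, e₂, hk₁, hk₂]
    rw [hhx, Real.norm_eq_abs, abs_of_nonneg (sq_nonneg _)]
    have hEk : Real.exp (-Φ₁ x / 2) * k₁ ≤ k₁ := by nlinarith
    have hFk : Real.exp (-Φ₂ x / 2) * k₂ ≤ k₂ := by nlinarith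
    have hEk0 : 0 ≤ Real.exp (-Φ₁ x / 2) * k₁ := by positivity
    have hFk0 : 0 ≤ Real.exp (-Φ₂ x / 2) * k₂ := by positivity
    nlinarith [mul_nonneg hEk0 hFk0, mul_pos hk₁pos hk₂pos]
  have hint_h : Integrable h μ₀ := by
    refine Integrable.mono' (integrable_const ((k₁ + k₂) ^ 2)) hmh.aestronglyMeasurable ?_
    exact Filter.Eventually.of_forall hbd
  have hint_e₂ : Integrable (fun x => Real.exp (-Φ₂ x)) μ₀ := by
    refine Integrable.mono' (integrable_const 1)
      (measurable_exp.comp h₂.neg).aestronglyMeasurable ?_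
    refine Filter.Eventually.of_forall fun x => ?_
    rw [Real.norm_eq_abs, abs_of_pos (Real.exp_pos _)]
    apply Real.exp_le_one_iff.mpr; have := h₂0 x; linarith
  -- the Hellinger distance squared
  have hpos : ∀ x, 0 ≤ h x := fun x => by rw [hh]; exact sq_nonneg _
  have hint0 : 0 ≤ ∫ x, h x ∂μ₀ := integral_nonneg hpos
  have hHsq : (hellingerDist μ₀ (fun x => Real.exp (-Φ₁ x) / C₁)
      (fun x => Real.exp (-Φ₂ x) / C₂)) ^ 2 = ∫ x, (1/2 : ℝ) * h x ∂μ₀ := by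
    simp only [hellingerDist]
    rw [← hh, integral_const_mul]
    exact Real.sq_sqrt (mul_nonneg (by norm_num) hint0)
  rw [hHsq]
  -- pass to lintegral
  have hnn : 0 ≤ᵐ[μ₀] fun x => (1/2 : ℝ) * h x :=
    Filter.Eventually.of_forall fun x => mul_nonneg (by norm_num) (hpos x)
  rw [MeasureTheory.ofReal_integral_eq_lintegral_ofReal (hint_h.const_mul _) hnn]
  have hsum : ∫⁻ x, ENNReal.ofReal ((1/2 : ℝ) * h x) ∂μ₀ ≤
      ∫⁻ x, (ENNReal.ofReal (1 / (4 * C₁) * (Φ₁ x - Φ₂ x) ^ 2)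
        + ENNReal.ofReal (K * Real.exp (-Φ₂ x))) ∂μ₀ := by
    refine lintegral_mono fun x => ?_
    calc ENNReal.ofReal ((1/2 : ℝ) * h x)
        ≤ ENNReal.ofReal (1 / (4 * C₁) * (Φ₁ x - Φ₂ x) ^ 2 + K * Real.exp (-Φ₂ x)) :=
          ENNReal.ofReal_le_ofReal (key x)
      _ ≤ _ := ENNReal.ofReal_add_le
  refine hsum.trans ?_
  have hm1 : Measurable fun x => ENNReal.ofReal (1 / (4 * C₁) * (Φ₁ x - Φ₂ x) ^ 2) :=
    (((h₁.sub h₂).pow_const 2).const_mul _).ennreal_ofReal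
  rw [lintegral_add_left hm1]
  have hterm1 : ∫⁻ x, ENNReal.ofReal (1 / (4 * C₁) * (Φ₁ x - Φ₂ x) ^ 2) ∂μ₀ =
      ENNReal.ofReal (1 / (4 * C₁)) * ∫⁻ x, ENNReal.ofReal ((Φ₁ x - Φ₂ x) ^ 2) ∂μ₀ := by
    rw [← lintegral_const_mul _ (f := fun x => ENNReal.ofReal ((Φ₁ x - Φ₂ x) ^ 2))
      ((h₁.sub h₂).pow_const 2).ennreal_ofReal]
    congr 1; funext x
    rw [← ENNReal.ofReal_mul (by positivity)]
  have hterm2 : ∫⁻ x, ENNReal.ofReal (K * Real.exp (-Φ₂ x)) ∂μ₀ =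
      ENNReal.ofReal (C₂ * K) := by
    have hKnn : (0:ℝ) ≤ K := by rw [hK]; exact sq_nonneg _
    calc ∫⁻ x, ENNReal.ofReal (K * Real.exp (-Φ₂ x)) ∂μ₀
        = ∫⁻ x, ENNReal.ofReal K * ENNReal.ofReal (Real.exp (-Φ₂ x)) ∂μ₀ := by
          congr 1; funext x; rw [ENNReal.ofReal_mul hKnn]
      _ = ENNReal.ofReal K * ∫⁻ x, ENNReal.ofReal (Real.exp (-Φ₂ x)) ∂μ₀ :=
          lintegral_const_mul _ (measurable_exp.comp h₂.neg).ennreal_ofReal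
      _ = ENNReal.ofReal K * ENNReal.ofReal C₂ := by
          rw [hC₂, MeasureTheory.ofReal_integral_eq_lintegral_ofReal hint_e₂
            (Filter.Eventually.of_forall fun x => (Real.exp_pos _).le)]
      _ = ENNReal.ofReal (C₂ * K) := by
          rw [← ENNReal.ofReal_mul hKnn, mul_comm]
  rw [hterm1, hterm2]
end

section
/- Let N ≥ 1, m ∈ ℝ^N, σ > 0 and β ∈ [0, 1]. Let μ be the Gaussian measure on ℝ^N given by the product ⊗_{n=1}^N N(m_n, σ) and ν the Gaussian measure ⊗_{n=1}^N N(0, σ). Then the pushforward of the product measure μ ⊗ ν on ℝ^N × ℝ^N under the preconditioned Crank–Nicolson (pCN) map T(Z, ω) = m + (1 − β²)^{1/2} (Z − m) + β ω equals μ. In other words, if Z ∼ N(m, σI) and ω ∼ N(0, σI) are independent, then the pCN proposal m + (1 − β²)^{1/2}(Z − m) + βω is again distributed as N(m, σI). -/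
open MeasureTheory ProbabilityTheory
open scoped NNReal ENNReal

namespace PCNAux

lemma map_withDensity_comp {α β : Type*} [MeasurableSpace α] [MeasurableSpace β]
    (μ : Measure α) {f : α → β} (hf : Measurable f) {g : β → ℝ≥0∞} (hg : Measurable g) :
    Measure.map f (μ.withDensity (g ∘ f)) = (Measure.map f μ).withDensity g := by
  ext s hs
  rw [Measure.map_apply hf hs, withDensity_apply _ (hf hs), withDensity_apply _ hs,
    MeasureTheory.setLIntegral_map hs hg hf]
  rfl

lemma pdf_mul (σ : ℝ≥0) {a b c d : ℝ} (h : a ^ 2 + b ^ 2 = c ^ 2 + d ^ 2) :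
    gaussianPDFReal 0 σ a * gaussianPDFReal 0 σ b
      = gaussianPDFReal 0 σ c * gaussianPDFReal 0 σ d := by
  simp only [gaussianPDFReal, sub_zero]
  rw [mul_mul_mul_comm, ← Real.exp_add, mul_mul_mul_comm, ← Real.exp_add]
  congr 2
  rw [← add_div, ← add_div]
  congr 1
  nlinarith [h]

lemma core (σ : ℝ≥0) (hσ : σ ≠ 0) {s β : ℝ} (h1 : s ^ 2 + β ^ 2 = 1) :
    Measure.map (fun p : ℝ × ℝ => s * p.1 + β * p.2)
      ((gaussianReal 0 σ).prod (gaussianReal 0 σ)) = gaussianReal 0 σ := by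
  set γ := gaussianReal 0 σ with hγdef
  set M : Matrix (Fin 2) (Fin 2) ℝ := !![s, β; -β, s] with hM
  set L : (Fin 2 → ℝ) →ₗ[ℝ] (Fin 2 → ℝ) := Matrix.toLin' M with hL
  have hLapp : ∀ x : Fin 2 → ℝ, L x = ![s * x 0 + β * x 1, -β * x 0 + s * x 1] := by
    intro x; funext i
    fin_cases i <;>
      simp [hL, hM, Matrix.toLin'_apply, Matrix.mulVec, dotProduct, Fin.sum_univ_two,
        Matrix.vecHead, Matrix.vecTail]
  have hLmeas : Measurable L := L.continuous_of_finiteDimensional.measurable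
  have hdet : LinearMap.det L = 1 := by
    rw [hL, LinearMap.det_toLin', hM, Matrix.det_fin_two_of]
    nlinarith [h1]
  have hvol : Measure.map L volume = volume := by
    rw [Real.map_linearMap_volume_pi_eq_smul_volume_pi (by rw [hdet]; exact one_ne_zero)]
    simp [hdet]
  set G : (Fin 2 → ℝ) → ℝ≥0∞ := fun x => gaussianPDF 0 σ (x 0) * gaussianPDF 0 σ (x 1) with hG
  have hGmeas : Measurable G :=
    ((measurable_gaussianPDF 0 σ).comp (measurable_pi_apply 0)).mul
      ((measurable_gaussianPDF 0 σ).comp (measurable_pi_apply 1))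
  have hGL : G ∘ L = G := by
    funext x
    simp only [Function.comp_apply, hG, hLapp x, Matrix.cons_val_zero, Matrix.cons_val_one,
      Matrix.head_cons]
    simp only [gaussianPDF]
    rw [← ENNReal.ofReal_mul (gaussianPDFReal_nonneg _ _ _),
      ← ENNReal.ofReal_mul (gaussianPDFReal_nonneg _ _ _)]
    congr 1
    exact pdf_mul σ (by nlinarith [h1])
  have hγ : γ = volume.withDensity (gaussianPDF 0 σ) := gaussianReal_of_var_ne_zero 0 hσ
  haveI : IsProbabilityMeasure (volume.withDensity (gaussianPDF 0 σ)) :=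
    hγ ▸ (inferInstance : IsProbabilityMeasure γ)
  have hprod : γ.prod γ = (volume.prod volume).withDensity
      fun p : ℝ × ℝ => gaussianPDF 0 σ p.1 * gaussianPDF 0 σ p.2 := by
    rw [hγ]
    refine Measure.prod_eq fun u t hu ht => ?_
    rw [withDensity_apply _ (hu.prod ht), ← Measure.prod_restrict,
      lintegral_prod_mul (measurable_gaussianPDF 0 σ).aemeasurable
        (measurable_gaussianPDF 0 σ).aemeasurable,
      withDensity_apply _ hu, withDensity_apply _ ht]
  set e : (Fin 2 → ℝ) ≃ᵐ ℝ × ℝ := MeasurableEquiv.finTwoArrow with he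
  have hpi : Measure.pi ![γ, γ] = volume.withDensity G := by
    have h1' : Measure.pi ![γ, γ] = Measure.map e.symm (γ.prod γ) :=
      ((measurePreserving_finTwoArrow_vec γ γ).symm _).map_eq.symm
    rw [h1', hprod]
    have hGp : (fun p : ℝ × ℝ => gaussianPDF 0 σ p.1 * gaussianPDF 0 σ p.2) = G ∘ e.symm := by
      funext p
      simp [hG, he, MeasurableEquiv.finTwoArrow]
    rw [hGp, map_withDensity_comp _ e.symm.measurable hGmeas]
    congr 1
    have h2' : Measure.map e.symm (volume.prod volume) = Measure.pi ![volume, volume] :=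
      ((measurePreserving_finTwoArrow_vec (volume : Measure ℝ) volume).symm _).map_eq
    rw [h2', volume_pi]
    congr 1
    funext i
    fin_cases i <;> rfl
  have hmapL : Measure.map L (Measure.pi ![γ, γ]) = Measure.pi ![γ, γ] := by
    rw [hpi]
    conv_lhs => rw [← hGL]
    rw [map_withDensity_comp _ hLmeas hGmeas, hvol]
  have hfmeas : Measurable fun p : ℝ × ℝ => s * p.1 + β * p.2 :=
    (measurable_fst.const_mul s).add (measurable_snd.const_mul β)
  have h1e : γ.prod γ = Measure.map e (Measure.pi ![γ, γ]) :=
    (measurePreserving_finTwoArrow_vec γ γ).map_eq.symm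
  rw [h1e, Measure.map_map hfmeas e.measurable]
  have hcomp : (fun p : ℝ × ℝ => s * p.1 + β * p.2) ∘ e = (fun x : Fin 2 → ℝ => x 0) ∘ L := by
    funext x
    simp [he, MeasurableEquiv.finTwoArrow, hLapp x]
  rw [hcomp, ← Measure.map_map (measurable_pi_apply 0) hLmeas, hmapL]
  have hfst : (fun x : Fin 2 → ℝ => x 0) = Prod.fst ∘ e := by
    funext x
    simp [he, MeasurableEquiv.finTwoArrow]
  rw [hfst, ← Measure.map_map measurable_fst e.measurable,
    (measurePreserving_finTwoArrow_vec γ γ).map_eq, Measure.map_fst_prod]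
  simp [hγdef]

lemma oneD (σ : ℝ≥0) (hσ : σ ≠ 0) {s β : ℝ} (h1 : s ^ 2 + β ^ 2 = 1) (c : ℝ) :
    Measure.map (fun p : ℝ × ℝ => c + s * (p.1 - c) + β * p.2)
      ((gaussianReal c σ).prod (gaussianReal 0 σ)) = gaussianReal c σ := by
  have hγc : gaussianReal c σ = (gaussianReal 0 σ).map (c + ·) := by
    rw [gaussianReal_map_const_add, zero_add]
  have hfmeas : Measurable fun p : ℝ × ℝ => s * p.1 + β * p.2 :=
    (measurable_fst.const_mul s).add (measurable_snd.const_mul β)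
  have hTmeas : Measurable fun p : ℝ × ℝ => c + s * (p.1 - c) + β * p.2 := by
    fun_prop
  rw [hγc]
  have hp : ((gaussianReal 0 σ).map (c + ·)).prod (gaussianReal 0 σ)
      = ((gaussianReal 0 σ).prod (gaussianReal 0 σ)).map (Prod.map (c + ·) id) := by
    calc ((gaussianReal 0 σ).map (c + ·)).prod (gaussianReal 0 σ)
        = ((gaussianReal 0 σ).map (c + ·)).prod ((gaussianReal 0 σ).map id) := by
          rw [Measure.map_id]
      _ = ((gaussianReal 0 σ).prod (gaussianReal 0 σ)).map (Prod.map (c + ·) id) :=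
          (Measure.map_prod_map _ _ (measurable_const_add c) measurable_id)
  rw [hp, Measure.map_map hTmeas ((measurable_const_add c).prodMap measurable_id)]
  have hcomp : (fun p : ℝ × ℝ => c + s * (p.1 - c) + β * p.2) ∘ Prod.map (c + ·) id
      = (c + ·) ∘ fun p : ℝ × ℝ => s * p.1 + β * p.2 := by
    funext p
    simp [Prod.map]
    ring
  rw [hcomp, ← Measure.map_map (measurable_const_add c) hfmeas, core σ hσ h1]

lemma pi_map_comp {N : ℕ} (κ : Fin N → Measure (ℝ × ℝ)) [∀ n, IsProbabilityMeasure (κ n)]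
    (F : Fin N → ℝ × ℝ → ℝ) (hF : ∀ n, Measurable (F n)) :
    Measure.map (fun g (n : Fin N) => F n (g n)) (Measure.pi κ)
      = Measure.pi fun n => (κ n).map (F n) := by
  haveI : ∀ n, IsProbabilityMeasure ((κ n).map (F n)) :=
    fun n => Measure.isProbabilityMeasure_map (hF n).aemeasurable
  have hmeas : Measurable fun (g : Fin N → ℝ × ℝ) (n : Fin N) => F n (g n) :=
    measurable_pi_lambda _ fun n => (hF n).comp (measurable_pi_apply n)
  refine (Measure.pi_eq fun t ht => ?_).symm
  rw [Measure.map_apply hmeas (MeasurableSet.univ_pi ht)]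
  have hpre : (fun g (n : Fin N) => F n (g n)) ⁻¹' Set.pi Set.univ t
      = Set.pi Set.univ fun n => F n ⁻¹' t n := by
    ext g; simp [Set.mem_pi]
  rw [hpre, Measure.pi_pi]
  exact Finset.prod_congr rfl fun n _ => (Measure.map_apply (hF n) (ht n)).symm

end PCNAux

/-- Invariance of the Gaussian prior `N(m, σI)` under the preconditioned
Crank–Nicolson proposal: if `Z ∼ N(m, σI)` and `ω ∼ N(0, σI)` are independent, then
`m + (1 − β²)^{1/2}(Z − m) + βω ∼ N(m, σI)`. -/
theorem pCN_preserves_gaussian_prior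
    (N : ℕ) (hN : 1 ≤ N) (m : Fin N → ℝ) (σ : ℝ≥0) (hσ : 0 < σ)
    (β : ℝ) (hβ : β ∈ Set.Icc (0 : ℝ) 1) :
    Measure.map
        (fun p : (Fin N → ℝ) × (Fin N → ℝ) =>
          fun n => m n + Real.sqrt (1 - β ^ 2) * (p.1 n - m n) + β * p.2 n)
        ((Measure.pi fun n => gaussianReal (m n) σ).prod
          (Measure.pi fun _ => gaussianReal 0 σ)) =
      Measure.pi fun n => gaussianReal (m n) σ := by
  have hσ' : σ ≠ 0 := hσ.ne'
  have hs : Real.sqrt (1 - β ^ 2) ^ 2 + β ^ 2 = 1 := by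
    rw [Real.sq_sqrt (by nlinarith [hβ.1, hβ.2])]
    ring
  set F : Fin N → ℝ × ℝ → ℝ :=
    fun n q => m n + Real.sqrt (1 - β ^ 2) * (q.1 - m n) + β * q.2 with hF
  have hFmeas : ∀ n, Measurable (F n) := by
    intro n; fun_prop
  set κ : Fin N → Measure (ℝ × ℝ) :=
    fun n => (gaussianReal (m n) σ).prod (gaussianReal 0 σ) with hκ
  haveI : ∀ n, IsProbabilityMeasure (κ n) := fun n => by
    rw [hκ]; infer_instance
  have hTmeas : Measurable fun p : (Fin N → ℝ) × (Fin N → ℝ) =>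
      fun n => m n + Real.sqrt (1 - β ^ 2) * (p.1 n - m n) + β * p.2 n := by
    fun_prop
  have he : (Measure.pi fun n => gaussianReal (m n) σ).prod
        (Measure.pi fun _ => gaussianReal 0 σ)
      = Measure.map (MeasurableEquiv.arrowProdEquivProdArrow ℝ ℝ (Fin N)) (Measure.pi κ) :=
    (measurePreserving_arrowProdEquivProdArrow ℝ ℝ (Fin N) _ _).map_eq.symm
  rw [he, Measure.map_map hTmeas
    (MeasurableEquiv.arrowProdEquivProdArrow ℝ ℝ (Fin N)).measurable]
  have hcomp : (fun p : (Fin N → ℝ) × (Fin N → ℝ) =>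
        fun n => m n + Real.sqrt (1 - β ^ 2) * (p.1 n - m n) + β * p.2 n)
      ∘ (MeasurableEquiv.arrowProdEquivProdArrow ℝ ℝ (Fin N))
      = fun g (n : Fin N) => F n (g n) := rfl
  rw [hcomp, PCNAux.pi_map_comp κ F hFmeas]
  congr 1
  funext n
  exact PCNAux.oneD σ hσ' hs (m n)
end
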